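/- The decomposition of a derivation of U as an inner derivation plus a combination of the grading derivations is unique: if t ∈ U and μ1, μ2 ∈ ℂ satisfy t·e1 − e1·t + μ1·e1 = 0 and t·e2 − e2·t + μ2·e2 = 0, then μ1 = μ2 = 0 and t is a scalar multiple of the identity (so ad_t = 0). -/

import Mathlib

noncomputable section

namespace TwoParamB2

/-- The free algebra on two generators `e₁, e₂` over `ℂ`. -/
abbrev F : Type := FreeAlgebra ℂ (Fin 2)

def g1 : F := FreeAlgebra.ι ℂ 0
def g2 : F := FreeAlgebra.ι ℂ 1

/-- The two-parameter quantum Serre relations defining `U = U_{r,s}^+(B₂)`. -/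
inductive URel (r s : ℂ) : F → F → Prop
  | serre1 : URel r s (g1 * g1 * g2 + (r ^ 2 * s ^ 2) • (g2 * g1 * g1))
      ((r ^ 2 + s ^ 2) • (g1 * g2 * g1))
  | serre2 : URel r s
      (g1 * g2 ^ 3 + (r * s * (r ^ 2 + r * s + s ^ 2)) • (g2 ^ 2 * g1 * g2))
      ((r ^ 2 + r * s + s ^ 2) • (g2 * g1 * g2 ^ 2) + (r ^ 3 * s ^ 3) • (g2 ^ 3 * g1))

/-- The algebra `U = U_{r,s}^+(B₂)`. -/
abbrev U (r s : ℂ) : Type := RingQuot (URel r s)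

/-- The generator `e₁` of `U`. -/
def E1 (r s : ℂ) : U r s := RingQuot.mkAlgHom ℂ (URel r s) g1

/-- The generator `e₂` of `U`. -/
def E2 (r s : ℂ) : U r s := RingQuot.mkAlgHom ℂ (URel r s) g2

def X1 (r s : ℂ) : U r s := E1 r s

def X2 (r s : ℂ) : U r s := E1 r s * E2 r s - (r ^ 2) • (E2 r s * E1 r s)

def X3 (r s : ℂ) : U r s := E2 r s * X2 r s - (s ^ 2)⁻¹ • (X2 r s * E2 r s)

def X4 (r s : ℂ) : U r s := E2 r s

/-! ### Auxiliary development -/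

section AuxDefs
variable (r s : ℂ)

/-- The representation space: free module on `ℤ⁴`. -/
abbrev VV : Type := (ℤ × ℤ × ℤ × ℤ) →₀ ℂ

/-- basis vector -/
def bb (x y z w : ℤ) : VV := Finsupp.single (x, y, z, w) 1

/-- `t ^ (-x)` as an opaque atom -/
def w1 (t : ℂ) (x : ℤ) : ℂ := t ^ (-x)

/-- `t ^ (-2x)` as an opaque atom -/
def w2 (t : ℂ) (x : ℤ) : ℂ := t ^ (-(2 * x))

def Pa (a : ℤ) : ℂ := s ^ 2 * (w2 s a - w2 r a) / (r ^ 2 - s ^ 2)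

def Qa (b : ℤ) : ℂ := r * s ^ 2 * (w2 s b - w1 r b * w1 s b) / (r - s)

def co (a b c : ℤ) : ℂ := w2 r a * w2 s b * w1 r c * w1 s c

/-- image of a basis vector under the action of `e₂`. -/
def phi (x y z w : ℤ) : VV :=
  (-(Pa r s x)) • bb (x - 1) (y + 1) z w + (w2 r x * Qa r s y) • bb x (y - 1) (z + 1) w
    + (co r s x y z) • bb x y z (w + 1)

/-- the action of `e₁`. -/
def A1 : VV →ₗ[ℂ] VV := Finsupp.lmapDomain ℂ ℂ (fun p => (p.1 + 1, p.2))

/-- the action of `e₂`. -/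
def A2 : VV →ₗ[ℂ] VV :=
  Finsupp.lsum ℂ (fun p => LinearMap.toSpanSingleton ℂ VV (phi r s p.1 p.2.1 p.2.2.1 p.2.2.2))

def opX2 : Module.End ℂ VV := A1 * A2 r s - (r ^ 2) • (A2 r s * A1)

def opX3 : Module.End ℂ VV := A2 r s * opX2 r s - (s ^ 2)⁻¹ • (opX2 r s * A2 r s)

/-- ordered (PBW) monomials of `U`. -/
def Mon (m : ℕ × ℕ × ℕ × ℕ) : U r s :=
  X1 r s ^ m.1 * X2 r s ^ m.2.1 * X3 r s ^ m.2.2.1 * X4 r s ^ m.2.2.2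

end AuxDefs

section AuxLemmas
variable {r s : ℂ}

lemma A1_bb (x y z w : ℤ) : A1 (bb x y z w) = bb (x + 1) y z w := by
  simp [A1, bb, Finsupp.lmapDomain_apply, Finsupp.mapDomain_single]

lemma A2_bb (x y z w : ℤ) : A2 r s (bb x y z w) = phi r s x y z w := by
  simp [A2, bb, Finsupp.lsum_single]

lemma w1_zero (t : ℂ) : w1 t 0 = 1 := by simp [w1]

lemma w2_zero (t : ℂ) : w2 t 0 = 1 := by simp [w2]

lemma w1_up {t : ℂ} (ht : t ≠ 0) (x : ℤ) : w1 t (x + 1) = t⁻¹ * w1 t x := by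
  rw [w1, w1, show (-(x + 1) : ℤ) = (-1) + (-x) by ring, zpow_add₀ ht, zpow_neg, zpow_one]

lemma w1_dn {t : ℂ} (ht : t ≠ 0) (x : ℤ) : w1 t (x - 1) = t * w1 t x := by
  rw [w1, w1, show (-(x - 1) : ℤ) = 1 + (-x) by ring, zpow_add₀ ht, zpow_one]

lemma w2_up {t : ℂ} (ht : t ≠ 0) (x : ℤ) : w2 t (x + 1) = (t ^ 2)⁻¹ * w2 t x := by
  rw [w2, w2, show (-(2 * (x + 1)) : ℤ) = (-2) + (-(2 * x)) by ring, zpow_add₀ ht, zpow_neg]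
  norm_cast

lemma w2_dn {t : ℂ} (ht : t ≠ 0) (x : ℤ) : w2 t (x - 1) = t ^ 2 * w2 t x := by
  rw [w2, w2, show (-(2 * (x - 1)) : ℤ) = 2 + (-(2 * x)) by ring, zpow_add₀ ht]
  norm_cast

lemma Pa_zero : Pa r s 0 = 0 := by simp [Pa, w2_zero]

lemma Qa_zero : Qa r s 0 = 0 := by simp [Qa, w2_zero, w1_zero]

lemma co_zero : co r s 0 0 0 = 1 := by simp [co, w1_zero, w2_zero]

lemma Pa_rec (hr : r ≠ 0) (hs : s ≠ 0) (hd : r ^ 2 - s ^ 2 ≠ 0) (a : ℤ) :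
    Pa r s (a + 1) = (r ^ 2)⁻¹ * Pa r s a + (r ^ 2)⁻¹ * w2 s a := by
  rw [Pa, Pa, w2_up hr, w2_up hs]
  field_simp
  ring

lemma Qa_rec (hr : r ≠ 0) (hs : s ≠ 0) (hd : r - s ≠ 0) (b : ℤ) :
    Qa r s (b + 1) = (s ^ 2)⁻¹ * Qa r s b + w1 r b * w1 s b := by
  rw [Qa, Qa, w2_up hs, w1_up hr, w1_up hs]
  field_simp
  ring

lemma co_au (hr : r ≠ 0) (a b c : ℤ) : co r s (a + 1) b c = (r ^ 2)⁻¹ * co r s a b c := by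
  rw [co, co, w2_up hr]; ring

lemma co_ad (hr : r ≠ 0) (a b c : ℤ) : co r s (a - 1) b c = r ^ 2 * co r s a b c := by
  rw [co, co, w2_dn hr]; ring

lemma co_bu (hs : s ≠ 0) (a b c : ℤ) : co r s a (b + 1) c = (s ^ 2)⁻¹ * co r s a b c := by
  rw [co, co, w2_up hs]; ring

lemma co_bd (hs : s ≠ 0) (a b c : ℤ) : co r s a (b - 1) c = s ^ 2 * co r s a b c := by
  rw [co, co, w2_dn hs]; ring

lemma co_cu (hr : r ≠ 0) (hs : s ≠ 0) (a b c : ℤ) :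
    co r s a b (c + 1) = r⁻¹ * s⁻¹ * co r s a b c := by
  rw [co, co, w1_up hr, w1_up hs]; ring

lemma endext {f g : Module.End ℂ (VV)} (h : ∀ x y z w, f (bb x y z w) = g (bb x y z w)) :
    f = g := by
  apply Finsupp.lhom_ext
  rintro ⟨x, y, z, w⟩ b
  have hb : (Finsupp.single ((x, y, z, w) : ℤ × ℤ × ℤ × ℤ) b : VV) = b • bb x y z w := by
    simp [bb]
  rw [hb, map_smul, map_smul, h]

lemma opX2_bb (hr : r ≠ 0) (hs : s ≠ 0) (hd : r ^ 2 - s ^ 2 ≠ 0)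
    (x y z w : ℤ) : opX2 r s (bb x y z w) = w2 s x • bb x (y + 1) z w := by
  simp only [opX2, LinearMap.sub_apply, Module.End.mul_apply, LinearMap.smul_apply,
    A1_bb, A2_bb, phi, map_add, map_smul, A1_bb, sub_add_cancel, add_sub_cancel_right,
    Pa_rec hr hs hd, w2_up hr, co_au hr]
  match_scalars <;> field_simp <;> ring

lemma opX3_bb (hr : r ≠ 0) (hs : s ≠ 0) (hd : r ^ 2 - s ^ 2 ≠ 0) (hd1 : r - s ≠ 0)
    (x y z w : ℤ) :
    opX3 r s (bb x y z w) = (w2 r x * w2 s x * w1 r y * w1 s y) • bb x y (z + 1) w := by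
  simp only [opX3, LinearMap.sub_apply, Module.End.mul_apply, LinearMap.smul_apply,
    A2_bb, opX2_bb hr hs hd, phi, map_add, map_smul, opX2_bb hr hs hd,
    sub_add_cancel, add_sub_cancel_right,
    Qa_rec hr hs hd1, w2_dn hs, w2_up hr, co_bu hs]
  match_scalars <;> field_simp <;> ring

end AuxLemmas

section OpIdent
variable {r s : ℂ}

lemma hGop (hr : r ≠ 0) (hs : s ≠ 0) (hd : r ^ 2 - s ^ 2 ≠ 0) (hd1 : r - s ≠ 0) :
    opX3 r s * A2 r s = (r * s) • (A2 r s * opX3 r s) := by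
  apply endext
  intro x y z w
  simp only [Module.End.mul_apply, LinearMap.smul_apply, A2_bb, phi, map_add, map_smul,
    opX3_bb hr hs hd hd1, A2_bb, sub_add_cancel, add_sub_cancel_right,
    w2_dn hr, w2_dn hs, w1_up hr, w1_up hs, w1_dn hr, w1_dn hs, co_cu hr hs]
  match_scalars <;> field_simp <;> ring

lemma S1op (hr : r ≠ 0) (hs : s ≠ 0) (hd : r ^ 2 - s ^ 2 ≠ 0) :
    A1 * A1 * A2 r s + (r ^ 2 * s ^ 2) • (A2 r s * A1 * A1)
      = (r ^ 2 + s ^ 2) • (A1 * A2 r s * A1) := by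
  apply endext
  intro x y z w
  simp only [LinearMap.add_apply, Module.End.mul_apply, LinearMap.smul_apply, A1_bb, A2_bb,
    phi, map_add, map_smul, A1_bb, show ∀ u : ℤ, u + 2 = u + 1 + 1 from fun u => by ring,
    show ∀ u : ℤ, 1 + u = u + 1 from fun u => by ring,
    Pa_rec hr hs hd, co_au hr, w2_up hr, w2_up hs, sub_add_cancel, add_sub_cancel_right]
  match_scalars <;> field_simp <;> ring

lemma S2op (hr : r ≠ 0) (hs : s ≠ 0) (hd : r ^ 2 - s ^ 2 ≠ 0) (hd1 : r - s ≠ 0) :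
    A1 * A2 r s ^ 3 + (r * s * (r ^ 2 + r * s + s ^ 2)) • (A2 r s ^ 2 * A1 * A2 r s)
      = (r ^ 2 + r * s + s ^ 2) • (A2 r s * A1 * A2 r s ^ 2)
        + (r ^ 3 * s ^ 3) • (A2 r s ^ 3 * A1) := by
  have cert : (A1 * A2 r s ^ 3 + (r * s * (r ^ 2 + r * s + s ^ 2)) • (A2 r s ^ 2 * A1 * A2 r s))
      - ((r ^ 2 + r * s + s ^ 2) • (A2 r s * A1 * A2 r s ^ 2)
        + (r ^ 3 * s ^ 3) • (A2 r s ^ 3 * A1))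
      = (-(s ^ 2)) • (opX3 r s * A2 r s) + (s ^ 2 * (r * s)) • (A2 r s * opX3 r s) := by
    apply LinearMap.ext
    intro v
    simp only [opX3, opX2, LinearMap.sub_apply, LinearMap.add_apply, LinearMap.smul_apply,
      Module.End.mul_apply, pow_succ, pow_zero, Module.End.one_apply, map_sub, map_add, map_smul]
    match_scalars <;> field_simp <;> ring
  have h0 : (A1 * A2 r s ^ 3 + (r * s * (r ^ 2 + r * s + s ^ 2)) • (A2 r s ^ 2 * A1 * A2 r s))
      - ((r ^ 2 + r * s + s ^ 2) • (A2 r s * A1 * A2 r s ^ 2)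
        + (r ^ 3 * s ^ 3) • (A2 r s ^ 3 * A1)) = 0 := by
    rw [cert, hGop hr hs hd hd1, smul_smul, ← add_smul]
    convert zero_smul ℂ _ using 2
    ring
  exact sub_eq_zero.mp h0

def rhoF (r s : ℂ) : F →ₐ[ℂ] Module.End ℂ (VV) := FreeAlgebra.lift ℂ ![A1, A2 r s]

lemma rhoF_g1 : rhoF r s g1 = A1 := by
  simp [rhoF, g1, FreeAlgebra.lift_ι_apply]

lemma rhoF_g2 : rhoF r s g2 = A2 r s := by
  simp [rhoF, g2, FreeAlgebra.lift_ι_apply]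

lemma rho_spec (hr : r ≠ 0) (hs : s ≠ 0) (hd : r ^ 2 - s ^ 2 ≠ 0) (hd1 : r - s ≠ 0) :
    ∃ ρ : U r s →ₐ[ℂ] Module.End ℂ (VV), ρ (E1 r s) = A1 ∧ ρ (E2 r s) = A2 r s := by
  have hrel : ∀ ⦃x y : F⦄, URel r s x y → rhoF r s x = rhoF r s y := by
    intro x y h
    cases h with
    | serre1 =>
        simp only [map_add, map_mul, map_smul, rhoF_g1, rhoF_g2]
        exact S1op hr hs hd
    | serre2 =>
        simp only [map_add, map_mul, map_smul, map_pow, rhoF_g1, rhoF_g2]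
        exact S2op hr hs hd hd1
  refine ⟨RingQuot.liftAlgHom ℂ ⟨rhoF r s, hrel⟩, ?_, ?_⟩
  · rw [E1, RingQuot.liftAlgHom_mkAlgHom_apply, rhoF_g1]
  · rw [E2, RingQuot.liftAlgHom_mkAlgHom_apply, rhoF_g2]

end OpIdent

section USide
variable {r s : ℂ}

lemma rel1U : E1 r s * E1 r s * E2 r s + (r ^ 2 * s ^ 2) • (E2 r s * E1 r s * E1 r s)
    = (r ^ 2 + s ^ 2) • (E1 r s * E2 r s * E1 r s) := by
  have h := RingQuot.mkAlgHom_rel ℂ (URel.serre1 (r := r) (s := s))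
  simpa only [map_add, map_mul, map_smul, E1, E2] using h

lemma rel2U : E1 r s * E2 r s ^ 3 + (r * s * (r ^ 2 + r * s + s ^ 2)) • (E2 r s ^ 2 * E1 r s * E2 r s)
    = (r ^ 2 + r * s + s ^ 2) • (E2 r s * E1 r s * E2 r s ^ 2)
      + (r ^ 3 * s ^ 3) • (E2 r s ^ 3 * E1 r s) := by
  have h := RingQuot.mkAlgHom_rel ℂ (URel.serre2 (r := r) (s := s))
  simpa only [map_add, map_mul, map_smul, map_pow, E1, E2] using h

lemma c12 : X1 r s * X2 r s = s ^ 2 • (X2 r s * X1 r s) := by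
  have cert : X1 r s * X2 r s - s ^ 2 • (X2 r s * X1 r s)
      = (E1 r s * E1 r s * E2 r s + (r ^ 2 * s ^ 2) • (E2 r s * E1 r s * E1 r s))
        - (r ^ 2 + s ^ 2) • (E1 r s * E2 r s * E1 r s) := by
    simp only [X1, X2, mul_sub, sub_mul, smul_sub, sub_smul, smul_smul, mul_smul_comm,
      smul_mul_assoc, mul_assoc]
    match_scalars <;> ring
  rw [rel1U, sub_self] at cert
  exact sub_eq_zero.mp cert

lemma g12 (hs : s ≠ 0) : X2 r s * X1 r s = (s ^ 2)⁻¹ • (X1 r s * X2 r s) := by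
  rw [c12, smul_smul, inv_mul_cancel₀ (pow_ne_zero 2 hs), one_smul]

lemma c34 (hs : s ≠ 0) : X3 r s * X4 r s = (r * s) • (X4 r s * X3 r s) := by
  have cert : X3 r s * X4 r s - (r * s) • (X4 r s * X3 r s)
      = (-(s ^ 2)⁻¹) • ((E1 r s * E2 r s ^ 3
            + (r * s * (r ^ 2 + r * s + s ^ 2)) • (E2 r s ^ 2 * E1 r s * E2 r s))
          - ((r ^ 2 + r * s + s ^ 2) • (E2 r s * E1 r s * E2 r s ^ 2)
            + (r ^ 3 * s ^ 3) • (E2 r s ^ 3 * E1 r s))) := by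
    simp only [X3, X2, X4, X1, pow_succ, pow_zero, one_mul, mul_sub, sub_mul, mul_add, add_mul,
      smul_sub, sub_smul, smul_add, smul_smul, mul_smul_comm, smul_mul_assoc, mul_assoc]
    match_scalars <;> field_simp <;> ring
  rw [rel2U, sub_self, smul_zero] at cert
  exact sub_eq_zero.mp cert

lemma c13 (hr : r ≠ 0) (hs : s ≠ 0) :
    X3 r s * X1 r s = ((r * s) ^ 2)⁻¹ • (X1 r s * X3 r s) := by
  have hG := g12 (r := r) hs
  have cert : X3 r s * X1 r s - ((r * s) ^ 2)⁻¹ • (X1 r s * X3 r s)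
      = E2 r s * (X2 r s * X1 r s - (s ^ 2)⁻¹ • (X1 r s * X2 r s))
        - ((r * s) ^ 2)⁻¹ • ((X2 r s * X1 r s - (s ^ 2)⁻¹ • (X1 r s * X2 r s)) * E2 r s) := by
    simp only [X3, X2, X4, X1, mul_sub, sub_mul, smul_sub, sub_smul, smul_smul, mul_smul_comm,
      smul_mul_assoc, mul_assoc]
    match_scalars <;> field_simp <;> ring
  rw [hG, sub_self, mul_zero, zero_mul, smul_zero, sub_zero] at cert
  exact sub_eq_zero.mp cert

lemma c23 (hr : r ≠ 0) (hs : s ≠ 0) :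
    X2 r s * X3 r s = (r * s) • (X3 r s * X2 r s) := by
  have h13 : X3 r s * X1 r s - ((r * s) ^ 2)⁻¹ • (X1 r s * X3 r s) = 0 := by
    rw [c13 hr hs, sub_self]
  have h34 : X3 r s * X4 r s - (r * s) • (X4 r s * X3 r s) = 0 := by
    rw [c34 hs, sub_self]
  have cert : X2 r s * X3 r s - (r * s) • (X3 r s * X2 r s)
      = (-(r * s)) • ((X3 r s * X1 r s - ((r * s) ^ 2)⁻¹ • (X1 r s * X3 r s)) * X4 r s)
        - (r⁻¹ * s⁻¹) • (X1 r s * (X3 r s * X4 r s - (r * s) • (X4 r s * X3 r s)))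
        + (r ^ 3 * s) • ((X3 r s * X4 r s - (r * s) • (X4 r s * X3 r s)) * X1 r s)
        + (r ^ 4 * s ^ 2) • (X4 r s * (X3 r s * X1 r s - ((r * s) ^ 2)⁻¹ • (X1 r s * X3 r s))) := by
    have hx2 : X2 r s = X1 r s * X4 r s - r ^ 2 • (X4 r s * X1 r s) := rfl
    rw [hx2]
    simp only [mul_sub, sub_mul, smul_sub, sub_smul, smul_smul, mul_smul_comm,
      smul_mul_assoc, mul_assoc]
    match_scalars <;> field_simp <;> ring
  rw [h13, h34] at cert
  simp only [mul_zero, zero_mul, smul_zero, sub_zero, add_zero, zero_add] at cert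
  exact sub_eq_zero.mp cert

end USide

section Spanning
variable {r s : ℂ}

lemma p21 (hs : s ≠ 0) (b : ℕ) :
    X2 r s ^ b * X1 r s = ((s ^ 2)⁻¹) ^ b • (X1 r s * X2 r s ^ b) := by
  induction b with
  | zero => simp
  | succ n ih =>
      rw [pow_succ, mul_assoc, g12 hs, mul_smul_comm, ← mul_assoc, ih]
      simp only [smul_mul_assoc, smul_smul, mul_assoc, pow_succ]
      module
lemma p31 (hr : r ≠ 0) (hs : s ≠ 0) (n : ℕ) :
    X3 r s ^ n * X1 r s = (((r * s) ^ 2)⁻¹) ^ n • (X1 r s * X3 r s ^ n) := by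
  induction n with
  | zero => simp
  | succ n ih =>
      rw [pow_succ, mul_assoc, c13 hr hs, mul_smul_comm, ← mul_assoc, ih]
      simp only [smul_mul_assoc, smul_smul, mul_assoc, pow_succ]
      module
lemma g23 (hr : r ≠ 0) (hs : s ≠ 0) :
    X3 r s * X2 r s = ((r * s))⁻¹ • (X2 r s * X3 r s) := by
  rw [c23 hr hs, smul_smul, inv_mul_cancel₀ (mul_ne_zero hr hs), one_smul]
lemma p32 (hr : r ≠ 0) (hs : s ≠ 0) (n : ℕ) :
    X3 r s ^ n * X2 r s = (((r * s))⁻¹) ^ n • (X2 r s * X3 r s ^ n) := by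
  induction n with
  | zero => simp
  | succ n ih =>
      rw [pow_succ, mul_assoc, g23 hr hs, mul_smul_comm, ← mul_assoc, ih]
      simp only [smul_mul_assoc, smul_smul, mul_assoc, pow_succ]
      module
lemma g34 (hr : r ≠ 0) (hs : s ≠ 0) :
    X4 r s * X3 r s = ((r * s))⁻¹ • (X3 r s * X4 r s) := by
  rw [c34 hs, smul_smul, inv_mul_cancel₀ (mul_ne_zero hr hs), one_smul]

/-- the span of the ordered monomials -/
def SpanM (r s : ℂ) : Submodule ℂ (U r s) := Submodule.span ℂ (Set.range (Mon r s))

lemma Mon_mem (m : ℕ × ℕ × ℕ × ℕ) : Mon r s m ∈ SpanM r s :=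
  Submodule.subset_span ⟨m, rfl⟩

lemma mulE2_mem {u : U r s} (hu : u ∈ SpanM r s) : u * E2 r s ∈ SpanM r s := by
  induction hu using Submodule.span_induction with
  | mem x hx =>
      obtain ⟨⟨a, b, c, d⟩, rfl⟩ := hx
      have : Mon r s (a, b, c, d) * E2 r s = Mon r s (a, b, c, d + 1) := by
        simp only [Mon, X4, pow_succ, mul_assoc]
      rw [this]; exact Mon_mem _
  | zero => simpa using (SpanM r s).zero_mem
  | add x y _ _ hx hy => rw [add_mul]; exact (SpanM r s).add_mem hx hy
  | smul a x _ hx => rw [smul_mul_assoc]; exact (SpanM r s).smul_mem a hx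

lemma mul3_mem (hr : r ≠ 0) (hs : s ≠ 0) (a b c d : ℕ) :
    Mon r s (a, b, c, d) * X3 r s ∈ SpanM r s := by
  induction d with
  | zero =>
      have : Mon r s (a, b, c, 0) * X3 r s = Mon r s (a, b, c + 1, 0) := by
        simp only [Mon, pow_zero, mul_one, pow_succ, mul_assoc]
      rw [this]; exact Mon_mem _
  | succ n ih =>
      have h1 : Mon r s (a, b, c, n + 1) = Mon r s (a, b, c, n) * X4 r s := by
        simp only [Mon, pow_succ, mul_assoc]
      rw [h1, mul_assoc, g34 hr hs, mul_smul_comm, ← mul_assoc]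
      exact (SpanM r s).smul_mem _ (mulE2_mem ih)

lemma mul2_mem (hr : r ≠ 0) (hs : s ≠ 0) (a b c d : ℕ) :
    Mon r s (a, b, c, d) * X2 r s ∈ SpanM r s := by
  induction d with
  | zero =>
      have : Mon r s (a, b, c, 0) * X2 r s
          = (((r * s))⁻¹) ^ c • Mon r s (a, b + 1, c, 0) := by
        simp only [Mon, pow_zero, mul_one, mul_assoc, p32 hr hs c, mul_smul_comm, pow_succ]
      rw [this]; exact (SpanM r s).smul_mem _ (Mon_mem _)
  | succ n ih =>
      have h1 : Mon r s (a, b, c, n + 1) = Mon r s (a, b, c, n) * X4 r s := by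
        simp only [Mon, pow_succ, mul_assoc]
      have h42 : X4 r s * X2 r s = X3 r s + (s ^ 2)⁻¹ • (X2 r s * X4 r s) := by
        simp only [X4]
        rw [X3, sub_add_cancel]
      rw [h1, mul_assoc, h42, mul_add, mul_smul_comm, ← mul_assoc]
      exact (SpanM r s).add_mem (mul3_mem hr hs a b c n)
        ((SpanM r s).smul_mem _ (mulE2_mem ih))

lemma mul1_mem (hr : r ≠ 0) (hs : s ≠ 0) (a b c d : ℕ) :
    Mon r s (a, b, c, d) * X1 r s ∈ SpanM r s := by
  induction d with
  | zero =>
      have : Mon r s (a, b, c, 0) * X1 r s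
          = ((((r * s) ^ 2)⁻¹) ^ c * ((s ^ 2)⁻¹) ^ b) • Mon r s (a + 1, b, c, 0) := by
        simp only [Mon, pow_zero, mul_one, mul_assoc, p31 hr hs c, mul_smul_comm]
        rw [← mul_assoc (X2 r s ^ b), p21 hs b]
        simp only [smul_mul_assoc, mul_smul_comm, smul_smul, mul_assoc, pow_succ]
      rw [this]; exact (SpanM r s).smul_mem _ (Mon_mem _)
  | succ n ih =>
      have h1 : Mon r s (a, b, c, n + 1) = Mon r s (a, b, c, n) * X4 r s := by
        simp only [Mon, pow_succ, mul_assoc]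
      have h41 : X4 r s * X1 r s = (r ^ 2)⁻¹ • (X1 r s * X4 r s) - (r ^ 2)⁻¹ • X2 r s := by
        have hx : X1 r s * X4 r s - X2 r s = r ^ 2 • (X4 r s * X1 r s) := by
          simp only [X1, X2, X4]; abel
        calc X4 r s * X1 r s = (r ^ 2)⁻¹ • (r ^ 2 • (X4 r s * X1 r s)) := by
              rw [smul_smul, inv_mul_cancel₀ (pow_ne_zero 2 hr), one_smul]
          _ = (r ^ 2)⁻¹ • (X1 r s * X4 r s - X2 r s) := by rw [hx]
          _ = _ := by rw [smul_sub]
      rw [h1, mul_assoc, h41, mul_sub, mul_smul_comm, mul_smul_comm, ← mul_assoc]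
      exact (SpanM r s).sub_mem ((SpanM r s).smul_mem _ (mulE2_mem ih))
        ((SpanM r s).smul_mem _ (mul2_mem hr hs a b c n))

lemma span_eq_top (hr : r ≠ 0) (hs : s ≠ 0) (t : U r s) : t ∈ SpanM r s := by
  obtain ⟨x, rfl⟩ := RingQuot.mkAlgHom_surjective ℂ (URel r s) t
  have key : ∀ x : F, ∀ u ∈ SpanM r s, u * RingQuot.mkAlgHom ℂ (URel r s) x ∈ SpanM r s := by
    intro x
    induction x using FreeAlgebra.induction with
    | grade0 c =>
        intro u hu
        rw [AlgHom.commutes, ← Algebra.commutes, ← Algebra.smul_def]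
        exact (SpanM r s).smul_mem c hu
    | grade1 i =>
        intro u hu
        fin_cases i
        · -- E1
          show u * X1 r s ∈ SpanM r s
          induction hu using Submodule.span_induction with
          | mem v hv =>
              obtain ⟨⟨a, b, c, d⟩, rfl⟩ := hv
              exact mul1_mem hr hs a b c d
          | zero => simpa using (SpanM r s).zero_mem
          | add v w _ _ hv hw => rw [add_mul]; exact (SpanM r s).add_mem hv hw
          | smul a v _ hv => rw [smul_mul_assoc]; exact (SpanM r s).smul_mem a hv
        · show u * E2 r s ∈ SpanM r s
          exact mulE2_mem hu
    | mul x y hx hy =>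
        intro u hu
        rw [map_mul, ← mul_assoc]
        exact hy _ (hx _ hu)
    | add x y hx hy =>
        intro u hu
        rw [map_add, mul_add]
        exact (SpanM r s).add_mem (hx _ hu) (hy _ hu)
  have h1 : (1 : U r s) ∈ SpanM r s := by
    have : (1 : U r s) = Mon r s (0, 0, 0, 0) := by simp [Mon]
    rw [this]; exact Mon_mem _
  simpa using key x 1 h1

end Spanning

section Chars
variable {r s : ℂ}

lemma char_exists (v : Fin 2 → ℂ) (hv : v 0 * v 1 = 0) :
    ∃ χ : U r s →ₐ[ℂ] ℂ, χ (E1 r s) = v 0 ∧ χ (E2 r s) = v 1 := by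
  have hrel : ∀ ⦃x y : F⦄, URel r s x y → (FreeAlgebra.lift ℂ v) x = (FreeAlgebra.lift ℂ v) y := by
    intro x y h
    cases h with
    | serre1 =>
        simp only [map_add, map_mul, map_smul, g1, g2, FreeAlgebra.lift_ι_apply]
        rcases mul_eq_zero.mp hv with h0 | h0 <;> simp [h0]
    | serre2 =>
        simp only [map_add, map_mul, map_smul, map_pow, g1, g2, FreeAlgebra.lift_ι_apply]
        rcases mul_eq_zero.mp hv with h0 | h0 <;> simp [h0]
  refine ⟨RingQuot.liftAlgHom ℂ ⟨FreeAlgebra.lift ℂ v, hrel⟩, ?_, ?_⟩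
  · rw [E1, RingQuot.liftAlgHom_mkAlgHom_apply, g1, FreeAlgebra.lift_ι_apply]
  · rw [E2, RingQuot.liftAlgHom_mkAlgHom_apply, g2, FreeAlgebra.lift_ι_apply]

end Chars

section VDefs2
variable (r s : ℂ)

def gam : ℕ → ℂ
  | 0 => 0
  | n + 1 => (r⁻¹ * s⁻¹) ^ n + (s ^ 2)⁻¹ * gam n

def alf : ℕ → ℂ
  | 0 => 0
  | n + 1 => -(Pa r s 1) * ((s ^ 2)⁻¹) ^ n + (r ^ 2)⁻¹ * alf n

def bet : ℕ → ℂ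
  | 0 => 0
  | n + 1 => -(Pa r s 1) * gam r s n + (r ^ 2)⁻¹ * bet n

end VDefs2

section VPow
variable {r s : ℂ}

lemma w1_one (ht : ∀ x : ℂ, True) : True := trivial

lemma w2_one {t : ℂ} (ht : t ≠ 0) : w2 t 1 = (t ^ 2)⁻¹ := by
  rw [show (1 : ℤ) = 0 + 1 from rfl, w2_up ht, w2_zero, mul_one]

lemma w1_one' {t : ℂ} (ht : t ≠ 0) : w1 t 1 = t⁻¹ := by
  rw [show (1 : ℤ) = 0 + 1 from rfl, w1_up ht, w1_zero, mul_one]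

lemma Qa_one (hr : r ≠ 0) (hs : s ≠ 0) (hd1 : r - s ≠ 0) : Qa r s 1 = 1 := by
  rw [show (1 : ℤ) = 0 + 1 from rfl, Qa_rec hr hs hd1, Qa_zero, w1_zero, w1_zero]; ring

lemma A2_bb0 (w : ℤ) : A2 r s (bb 0 0 0 w) = bb 0 0 0 (w + 1) := by
  rw [A2_bb, phi, Pa_zero, Qa_zero, co_zero]
  simp

lemma A2_sp1 (hr : r ≠ 0) (hs : s ≠ 0) (w : ℤ) :
    A2 r s (bb 1 0 0 w) = (-(Pa r s 1)) • bb 0 1 0 w + (r ^ 2)⁻¹ • bb 1 0 0 (w + 1) := by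
  rw [A2_bb, phi, Qa_zero]
  norm_num [co, w2_one hr, w2_zero, w1_zero]

lemma A2_sp01 (hr : r ≠ 0) (hs : s ≠ 0) (hd1 : r - s ≠ 0) (w : ℤ) :
    A2 r s (bb 0 1 0 w) = bb 0 0 1 w + (s ^ 2)⁻¹ • bb 0 1 0 (w + 1) := by
  rw [A2_bb, phi, Pa_zero, Qa_one hr hs hd1]
  norm_num [co, w2_one hs, w2_zero, w1_zero]

lemma A2_sp001 (hr : r ≠ 0) (hs : s ≠ 0) (w : ℤ) :
    A2 r s (bb 0 0 1 w) = (r⁻¹ * s⁻¹) • bb 0 0 1 (w + 1) := by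
  rw [A2_bb, phi, Pa_zero, Qa_zero]
  norm_num [co, w2_zero, w1_one' hr, w1_one' hs]

lemma A1_pow (n : ℕ) (x y z w : ℤ) : (A1 ^ n) (bb x y z w) = bb (x + n) y z w := by
  induction n with
  | zero => simp
  | succ n ih =>
      rw [pow_succ', Module.End.mul_apply, ih, A1_bb]
      push_cast
      ring_nf

lemma opX2_pow (hr : r ≠ 0) (hs : s ≠ 0) (hd : r ^ 2 - s ^ 2 ≠ 0) (n : ℕ) (x y z w : ℤ) :
    (opX2 r s ^ n) (bb x y z w) = ((w2 s x) ^ n) • bb x (y + n) z w := by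
  induction n with
  | zero => simp
  | succ n ih =>
      rw [pow_succ', Module.End.mul_apply, ih, map_smul, opX2_bb hr hs hd, smul_smul, pow_succ]
      push_cast
      ring_nf

lemma opX3_pow (hr : r ≠ 0) (hs : s ≠ 0) (hd : r ^ 2 - s ^ 2 ≠ 0) (hd1 : r - s ≠ 0)
    (n : ℕ) (x y z w : ℤ) :
    (opX3 r s ^ n) (bb x y z w)
      = ((w2 r x * w2 s x * w1 r y * w1 s y) ^ n) • bb x y (z + n) w := by
  induction n with
  | zero => simp
  | succ n ih =>
      rw [pow_succ', Module.End.mul_apply, ih, map_smul, opX3_bb hr hs hd hd1, smul_smul,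
        pow_succ]
      push_cast
      ring_nf

lemma A2_pow0 (n : ℕ) (w : ℤ) : (A2 r s ^ n) (bb 0 0 0 w) = bb 0 0 0 (w + n) := by
  induction n with
  | zero => simp
  | succ n ih =>
      rw [pow_succ', Module.End.mul_apply, ih, A2_bb0]
      push_cast
      ring_nf

lemma A2_pow001 (hr : r ≠ 0) (hs : s ≠ 0) (n : ℕ) (w : ℤ) :
    (A2 r s ^ n) (bb 0 0 1 w) = ((r⁻¹ * s⁻¹) ^ n) • bb 0 0 1 (w + n) := by
  induction n with
  | zero => simp
  | succ n ih =>
      rw [pow_succ', Module.End.mul_apply, ih, map_smul, A2_sp001 hr hs, smul_smul, pow_succ]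
      push_cast
      ring_nf

lemma A2_pow01 (hr : r ≠ 0) (hs : s ≠ 0) (hd1 : r - s ≠ 0) (n : ℕ) (w : ℤ) :
    (A2 r s ^ n) (bb 0 1 0 w)
      = (((s ^ 2)⁻¹) ^ n) • bb 0 1 0 (w + n) + gam r s n • bb 0 0 1 (w + n - 1) := by
  induction n generalizing w with
  | zero => simp [gam]
  | succ n ih =>
      rw [pow_succ, Module.End.mul_apply, A2_sp01 hr hs hd1, map_add, map_smul,
        A2_pow001 hr hs, ih]
      rw [show gam r s (n + 1) = (r⁻¹ * s⁻¹) ^ n + (s ^ 2)⁻¹ * gam r s n from rfl]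
      push_cast
      ring_nf
      module

lemma A2_pow1 (hr : r ≠ 0) (hs : s ≠ 0) (hd1 : r - s ≠ 0) (n : ℕ) (w : ℤ) :
    (A2 r s ^ n) (bb 1 0 0 w)
      = (((r ^ 2)⁻¹) ^ n) • bb 1 0 0 (w + n) + alf r s n • bb 0 1 0 (w + n - 1)
        + bet r s n • bb 0 0 1 (w + n - 2) := by
  induction n generalizing w with
  | zero => simp [alf, bet]
  | succ n ih =>
      rw [pow_succ, Module.End.mul_apply, A2_sp1 hr hs, map_add, map_smul, map_smul,
        A2_pow01 hr hs hd1, ih]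
      rw [show alf r s (n + 1) = -(Pa r s 1) * ((s ^ 2)⁻¹) ^ n + (r ^ 2)⁻¹ * alf r s n from rfl,
        show bet r s (n + 1) = -(Pa r s 1) * gam r s n + (r ^ 2)⁻¹ * bet r s n from rfl]
      push_cast
      ring_nf
      module

end VPow

section Claims
variable {r s : ℂ}

lemma co_ne_one (hr : r ≠ 0) (hs : s ≠ 0)
    (hrs : ∀ m n : ℤ, r ^ m * s ^ n = 1 → m = 0 ∧ n = 0) (a b c : ℕ)
    (h : co r s a b c = 1) : a = 0 ∧ b = 0 ∧ c = 0 := by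
  have e1 : r ^ (-(2 * (a : ℤ) + c)) = w2 r a * w1 r c := by
    rw [w2, w1, ← zpow_add₀ hr]; ring_nf
  have e2 : s ^ (-(2 * (b : ℤ) + c)) = w2 s b * w1 s c := by
    rw [w2, w1, ← zpow_add₀ hs]; ring_nf
  have hco : r ^ (-(2 * (a : ℤ) + c)) * s ^ (-(2 * (b : ℤ) + c)) = 1 := by
    rw [e1, e2, ← h, co]; ring
  have := hrs _ _ hco
  omega

lemma kap_ne_one (hr : r ≠ 0) (hs : s ≠ 0)
    (hrs : ∀ m n : ℤ, r ^ m * s ^ n = 1 → m = 0 ∧ n = 0) (d : ℕ)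
    (h : ((r ^ 2)⁻¹) ^ d = 1) : d = 0 := by
  have h1 : (r ^ (2 * d))⁻¹ = 1 := by rw [pow_mul, ← inv_pow]; exact h
  have h1' : r ^ (2 * d) = 1 := by rwa [inv_eq_one] at h1
  have h2 : r ^ ((2 * d : ℕ) : ℤ) * s ^ (0 : ℤ) = 1 := by
    rw [zpow_natCast, zpow_zero, mul_one]; exact_mod_cast h1'
  have := hrs _ _ h2
  omega

lemma claim_abc (hr : r ≠ 0) (hs : s ≠ 0)
    (hrs : ∀ m n : ℤ, r ^ m * s ^ n = 1 → m = 0 ∧ n = 0)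
    (c : (ℕ × ℕ × ℕ × ℕ) →₀ ℂ)
    (heq : (c.sum fun m cm => cm • bb (m.1 : ℤ) (m.2.1 : ℤ) (m.2.2.1 : ℤ) ((m.2.2.2 : ℤ) + 1))
      = (c.sum fun m cm =>
          (cm * (-(Pa r s (m.1 : ℤ)))) • bb ((m.1 : ℤ) - 1) ((m.2.1 : ℤ) + 1) (m.2.2.1 : ℤ) (m.2.2.2 : ℤ))
        + (c.sum fun m cm =>
          (cm * (w2 r (m.1 : ℤ) * Qa r s (m.2.1 : ℤ))) • bb (m.1 : ℤ) ((m.2.1 : ℤ) - 1) ((m.2.2.1 : ℤ) + 1) (m.2.2.2 : ℤ))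
        + (c.sum fun m cm =>
          (cm * co r s (m.1 : ℤ) (m.2.1 : ℤ) (m.2.2.1 : ℤ)) • bb (m.1 : ℤ) (m.2.1 : ℤ) (m.2.2.1 : ℤ) ((m.2.2.2 : ℤ) + 1))) :
    ∀ a b cc d : ℕ, ¬(a = 0 ∧ b = 0 ∧ cc = 0) → c (a, b, cc, d) = 0 := by
  classical
  set D := c.support.sup (fun m => m.2.2.2) with hD
  have hbound : ∀ m : ℕ × ℕ × ℕ × ℕ, D < m.2.2.2 → c m = 0 := by
    intro m hm
    by_contra hne
    have hle : m.2.2.2 ≤ D :=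
      Finset.le_sup (f := fun m : ℕ × ℕ × ℕ × ℕ => m.2.2.2) (Finsupp.mem_support_iff.mpr hne)
    omega
  -- pointwise evaluation of heq
  have hpt : ∀ q : ℤ × ℤ × ℤ × ℤ,
      (c.sum fun m cm => cm * (if ((m.1 : ℤ), (m.2.1 : ℤ), (m.2.2.1 : ℤ), (m.2.2.2 : ℤ) + 1) = q then (1:ℂ) else 0))
      = (c.sum fun m cm => (cm * (-(Pa r s (m.1 : ℤ)))) * (if (((m.1 : ℤ) - 1), ((m.2.1 : ℤ) + 1), (m.2.2.1 : ℤ), (m.2.2.2 : ℤ)) = q then 1 else 0))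
        + (c.sum fun m cm => (cm * (w2 r (m.1 : ℤ) * Qa r s (m.2.1 : ℤ))) * (if ((m.1 : ℤ), ((m.2.1 : ℤ) - 1), ((m.2.2.1 : ℤ) + 1), (m.2.2.2 : ℤ)) = q then 1 else 0))
        + (c.sum fun m cm => (cm * co r s (m.1 : ℤ) (m.2.1 : ℤ) (m.2.2.1 : ℤ)) * (if ((m.1 : ℤ), (m.2.1 : ℤ), (m.2.2.1 : ℤ), (m.2.2.2 : ℤ) + 1) = q then 1 else 0)) := by
    intro q
    have h := DFunLike.congr_fun heq q
    simpa only [Finsupp.sum_apply, Finsupp.add_apply, Finsupp.smul_apply, bb,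
      Finsupp.single_apply, smul_eq_mul, mul_ite, mul_one, mul_zero] using h
  -- the extraction step
  have EX : ∀ a b cc d : ℕ,
      (∀ a' b' c' : ℕ, ¬(a' = 0 ∧ b' = 0 ∧ c' = 0) → c (a', b', c', d + 1) = 0) →
      ¬(a = 0 ∧ b = 0 ∧ cc = 0) → c (a, b, cc, d) = 0 := by
    intro a b cc d hnext habc
    have h := hpt ((a : ℤ), (b : ℤ), (cc : ℤ), (d : ℤ) + 1)
    rw [Finsupp.sum, Finsupp.sum, Finsupp.sum, Finsupp.sum] at h
    have hL : ∑ m ∈ c.support, c m * (if ((m.1 : ℤ), (m.2.1 : ℤ), (m.2.2.1 : ℤ), (m.2.2.2 : ℤ) + 1) = ((a : ℤ), (b : ℤ), (cc : ℤ), (d : ℤ) + 1) then (1:ℂ) else 0)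
        = c (a, b, cc, d) := by
      rw [Finset.sum_eq_single (a, b, cc, d)]
      · simp
      · intro m hm hne
        rw [if_neg, mul_zero]
        simp only [Prod.mk.injEq]
        intro hh
        apply hne
        have h1 : m.1 = a := by omega
        have h2 : m.2.1 = b := by omega
        have h3 : m.2.2.1 = cc := by omega
        have h4 : m.2.2.2 = d := by omega
        calc m = (m.1, m.2.1, m.2.2.1, m.2.2.2) := rfl
          _ = (a, b, cc, d) := by rw [h1, h2, h3, h4]
      · intro hnot
        simp [Finsupp.notMem_support_iff.mp hnot]
    have hS1 : ∑ m ∈ c.support, (c m * (-(Pa r s (m.1 : ℤ)))) * (if (((m.1 : ℤ) - 1), ((m.2.1 : ℤ) + 1), (m.2.2.1 : ℤ), (m.2.2.2 : ℤ)) = ((a : ℤ), (b : ℤ), (cc : ℤ), (d : ℤ) + 1) then (1:ℂ) else 0) = 0 := by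
      apply Finset.sum_eq_zero
      intro m hm
      split_ifs with hif
      · simp only [Prod.mk.injEq] at hif
        have h1 : m.1 = a + 1 := by omega
        have h4 : m.2.2.2 = d + 1 := by omega
        have h2 : b = m.2.1 + 1 := by omega
        have hcm : c m = 0 := by
          have : c (m.1, m.2.1, m.2.2.1, m.2.2.2) = 0 := by
            rw [h1, h4]
            exact hnext (a + 1) m.2.1 m.2.2.1 (by omega)
          simpa using this
        rw [hcm]; ring
      · rw [mul_zero]
    have hS2 : ∑ m ∈ c.support, (c m * (w2 r (m.1 : ℤ) * Qa r s (m.2.1 : ℤ))) * (if ((m.1 : ℤ), ((m.2.1 : ℤ) - 1), ((m.2.2.1 : ℤ) + 1), (m.2.2.2 : ℤ)) = ((a : ℤ), (b : ℤ), (cc : ℤ), (d : ℤ) + 1) then (1:ℂ) else 0) = 0 := by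
      apply Finset.sum_eq_zero
      intro m hm
      split_ifs with hif
      · simp only [Prod.mk.injEq] at hif
        have h2 : m.2.1 = b + 1 := by omega
        have h4 : m.2.2.2 = d + 1 := by omega
        have hcm : c m = 0 := by
          have : c (m.1, m.2.1, m.2.2.1, m.2.2.2) = 0 := by
            rw [h2, h4]
            exact hnext m.1 (b + 1) m.2.2.1 (by omega)
          simpa using this
        rw [hcm]; ring
      · rw [mul_zero]
    have hS3 : ∑ m ∈ c.support, (c m * co r s (m.1 : ℤ) (m.2.1 : ℤ) (m.2.2.1 : ℤ)) * (if ((m.1 : ℤ), (m.2.1 : ℤ), (m.2.2.1 : ℤ), (m.2.2.2 : ℤ) + 1) = ((a : ℤ), (b : ℤ), (cc : ℤ), (d : ℤ) + 1) then (1:ℂ) else 0)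
        = c (a, b, cc, d) * co r s (a : ℤ) (b : ℤ) (cc : ℤ) := by
      rw [Finset.sum_eq_single (a, b, cc, d)]
      · simp
      · intro m hm hne
        rw [if_neg, mul_zero]
        simp only [Prod.mk.injEq]
        intro hh
        apply hne
        have h1 : m.1 = a := by omega
        have h2 : m.2.1 = b := by omega
        have h3 : m.2.2.1 = cc := by omega
        have h4 : m.2.2.2 = d := by omega
        calc m = (m.1, m.2.1, m.2.2.1, m.2.2.2) := rfl
          _ = (a, b, cc, d) := by rw [h1, h2, h3, h4]
      · intro hnot
        simp [Finsupp.notMem_support_iff.mp hnot]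
    rw [hL, hS1, hS2, hS3, zero_add, zero_add] at h
    by_contra hne
    have h' : c (a, b, cc, d) * (1 - co r s (a : ℤ) (b : ℤ) (cc : ℤ)) = 0 := by
      linear_combination h
    rcases mul_eq_zero.mp h' with h0 | h0
    · exact hne h0
    · have hco : co r s (a : ℤ) (b : ℤ) (cc : ℤ) = 1 := by
        have := sub_eq_zero.mp h0
        exact this.symm
      obtain ⟨ha, hb, hcc⟩ := co_ne_one hr hs hrs a b cc hco
      exact habc ⟨ha, hb, hcc⟩
  -- downward induction on the level
  have main : ∀ n : ℕ, ∀ a b cc d : ℕ, D ≤ d + n → ¬(a = 0 ∧ b = 0 ∧ cc = 0) → c (a, b, cc, d) = 0 := by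
    intro n
    induction n with
    | zero =>
        intro a b cc d hdn habc
        refine EX a b cc d (fun a' b' c' _ => ?_) habc
        exact hbound (a', b', c', d + 1) (show D < d + 1 by omega)
    | succ n ih =>
        intro a b cc d hdn habc
        refine EX a b cc d (fun a' b' c' h' => ?_) habc
        exact ih a' b' c' (d + 1) (by omega) h'
  intro a b cc d habc
  exact main D a b cc d (by omega) habc

end Claims

section ClaimD
variable {r s : ℂ}

lemma claim_d (hr : r ≠ 0) (hs : s ≠ 0)
    (hrs : ∀ m n : ℤ, r ^ m * s ^ n = 1 → m = 0 ∧ n = 0)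
    (c : (ℕ × ℕ × ℕ × ℕ) →₀ ℂ) (L N : (ℕ × ℕ × ℕ × ℕ) → ℂ)
    (heq : (c.sum fun m cm =>
        (cm * (((r ^ 2)⁻¹) ^ m.2.2.2 * ((r ^ 2)⁻¹ * (s ^ 2)⁻¹) ^ m.2.2.1 * ((s ^ 2)⁻¹) ^ m.2.1))
          • bb ((m.1 : ℤ) + 1) (m.2.1 : ℤ) (m.2.2.1 : ℤ) (m.2.2.2 : ℤ))
      + (c.sum fun m cm =>
        (cm * L m) • bb (m.1 : ℤ) ((m.2.1 : ℤ) + 1) (m.2.2.1 : ℤ) ((m.2.2.2 : ℤ) - 1))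
      + (c.sum fun m cm =>
        (cm * N m) • bb (m.1 : ℤ) (m.2.1 : ℤ) ((m.2.2.1 : ℤ) + 1) ((m.2.2.2 : ℤ) - 2))
      = c.sum fun m cm => cm • bb ((m.1 : ℤ) + 1) (m.2.1 : ℤ) (m.2.2.1 : ℤ) (m.2.2.2 : ℤ)) :
    ∀ d : ℕ, d ≠ 0 → c (0, 0, 0, d) = 0 := by
  classical
  intro d hd
  have hpt : ∀ q : ℤ × ℤ × ℤ × ℤ,
      (c.sum fun m cm =>
        (cm * (((r ^ 2)⁻¹) ^ m.2.2.2 * ((r ^ 2)⁻¹ * (s ^ 2)⁻¹) ^ m.2.2.1 * ((s ^ 2)⁻¹) ^ m.2.1))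
          * (if ((m.1 : ℤ) + 1, (m.2.1 : ℤ), (m.2.2.1 : ℤ), (m.2.2.2 : ℤ)) = q then (1:ℂ) else 0))
      + (c.sum fun m cm =>
        (cm * L m) * (if ((m.1 : ℤ), (m.2.1 : ℤ) + 1, (m.2.2.1 : ℤ), (m.2.2.2 : ℤ) - 1) = q then 1 else 0))
      + (c.sum fun m cm =>
        (cm * N m) * (if ((m.1 : ℤ), (m.2.1 : ℤ), (m.2.2.1 : ℤ) + 1, (m.2.2.2 : ℤ) - 2) = q then 1 else 0))
      = c.sum fun m cm => cm * (if ((m.1 : ℤ) + 1, (m.2.1 : ℤ), (m.2.2.1 : ℤ), (m.2.2.2 : ℤ)) = q then 1 else 0) := by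
    intro q
    have h := DFunLike.congr_fun heq q
    simpa only [Finsupp.sum_apply, Finsupp.add_apply, Finsupp.smul_apply, bb,
      Finsupp.single_apply, smul_eq_mul, mul_ite, mul_one, mul_zero] using h
  have h := hpt ((1 : ℤ), (0 : ℤ), (0 : ℤ), (d : ℤ))
  rw [Finsupp.sum, Finsupp.sum, Finsupp.sum, Finsupp.sum] at h
  have hK : ∑ m ∈ c.support,
      (c m * (((r ^ 2)⁻¹) ^ m.2.2.2 * ((r ^ 2)⁻¹ * (s ^ 2)⁻¹) ^ m.2.2.1 * ((s ^ 2)⁻¹) ^ m.2.1))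
        * (if ((m.1 : ℤ) + 1, (m.2.1 : ℤ), (m.2.2.1 : ℤ), (m.2.2.2 : ℤ)) = ((1 : ℤ), (0 : ℤ), (0 : ℤ), (d : ℤ)) then (1:ℂ) else 0)
      = c (0, 0, 0, d) * ((r ^ 2)⁻¹) ^ d := by
    rw [Finset.sum_eq_single (0, 0, 0, d)]
    · simp
    · intro m hm hne
      rw [if_neg, mul_zero]
      simp only [Prod.mk.injEq]
      intro hh
      apply hne
      have h1 : m.1 = 0 := by omega
      have h2 : m.2.1 = 0 := by omega
      have h3 : m.2.2.1 = 0 := by omega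
      have h4 : m.2.2.2 = d := by omega
      calc m = (m.1, m.2.1, m.2.2.1, m.2.2.2) := rfl
        _ = (0, 0, 0, d) := by rw [h1, h2, h3, h4]
    · intro hnot
      simp [Finsupp.notMem_support_iff.mp hnot]
  have hL : ∑ m ∈ c.support,
      (c m * L m) * (if ((m.1 : ℤ), (m.2.1 : ℤ) + 1, (m.2.2.1 : ℤ), (m.2.2.2 : ℤ) - 1) = ((1 : ℤ), (0 : ℤ), (0 : ℤ), (d : ℤ)) then (1:ℂ) else 0) = 0 := by
    apply Finset.sum_eq_zero
    intro m hm
    rw [if_neg, mul_zero]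
    simp only [Prod.mk.injEq]
    intro hh
    omega
  have hN : ∑ m ∈ c.support,
      (c m * N m) * (if ((m.1 : ℤ), (m.2.1 : ℤ), (m.2.2.1 : ℤ) + 1, (m.2.2.2 : ℤ) - 2) = ((1 : ℤ), (0 : ℤ), (0 : ℤ), (d : ℤ)) then (1:ℂ) else 0) = 0 := by
    apply Finset.sum_eq_zero
    intro m hm
    rw [if_neg, mul_zero]
    simp only [Prod.mk.injEq]
    intro hh
    omega
  have hR : ∑ m ∈ c.support,
      c m * (if ((m.1 : ℤ) + 1, (m.2.1 : ℤ), (m.2.2.1 : ℤ), (m.2.2.2 : ℤ)) = ((1 : ℤ), (0 : ℤ), (0 : ℤ), (d : ℤ)) then (1:ℂ) else 0)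
      = c (0, 0, 0, d) := by
    rw [Finset.sum_eq_single (0, 0, 0, d)]
    · simp
    · intro m hm hne
      rw [if_neg, mul_zero]
      simp only [Prod.mk.injEq]
      intro hh
      apply hne
      have h1 : m.1 = 0 := by omega
      have h2 : m.2.1 = 0 := by omega
      have h3 : m.2.2.1 = 0 := by omega
      have h4 : m.2.2.2 = d := by omega
      calc m = (m.1, m.2.1, m.2.2.1, m.2.2.2) := rfl
        _ = (0, 0, 0, d) := by rw [h1, h2, h3, h4]
    · intro hnot
      simp [Finsupp.notMem_support_iff.mp hnot]
  rw [hK, hL, hN, hR, add_zero, add_zero] at h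
  by_contra hne
  have h' : c (0, 0, 0, d) * (((r ^ 2)⁻¹) ^ d - 1) = 0 := by linear_combination h
  rcases mul_eq_zero.mp h' with h0 | h0
  · exact hne h0
  · have : ((r ^ 2)⁻¹) ^ d = 1 := by
      have := sub_eq_zero.mp h0
      exact this
    exact hd (kap_ne_one hr hs hrs d this)

end ClaimD

theorem stmt7' (r s : ℂ) (hr : r ≠ 0) (hs : s ≠ 0)
    (hrs : ∀ m n : ℤ, r ^ m * s ^ n = 1 → m = 0 ∧ n = 0)
    (t : U r s) (μ1 μ2 : ℂ)
    (h1 : t * E1 r s - E1 r s * t + μ1 • E1 r s = 0)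
    (h2 : t * E2 r s - E2 r s * t + μ2 • E2 r s = 0) :
    μ1 = 0 ∧ μ2 = 0 ∧ ∃ c : ℂ, t = algebraMap ℂ (U r s) c := by
  classical
  -- characters kill μ1, μ2
  obtain ⟨χ1, hχ11, hχ12⟩ := char_exists (r := r) (s := s) ![1, 0] (by norm_num)
  obtain ⟨χ2, hχ21, hχ22⟩ := char_exists (r := r) (s := s) ![0, 1] (by norm_num)
  have hχ11' : χ1 (E1 r s) = 1 := by simpa using hχ11
  have hχ22' : χ2 (E2 r s) = 1 := by simpa using hχ22
  have hμ1 : μ1 = 0 := by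
    have h := congrArg χ1 h1
    simp only [map_add, map_sub, map_mul, map_smul, hχ11', map_zero, smul_eq_mul, mul_one,
      one_mul] at h
    linear_combination h
  have hμ2 : μ2 = 0 := by
    have h := congrArg χ2 h2
    simp only [map_add, map_sub, map_mul, map_smul, hχ22', map_zero, smul_eq_mul, mul_one,
      one_mul] at h
    linear_combination h
  refine ⟨hμ1, hμ2, ?_⟩
  have h1' : t * E1 r s = E1 r s * t := by
    have h := h1; rw [hμ1, zero_smul, add_zero] at h; exact sub_eq_zero.mp h
  have h2' : t * E2 r s = E2 r s * t := by
    have h := h2; rw [hμ2, zero_smul, add_zero] at h; exact sub_eq_zero.mp h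
  -- nondegeneracy facts
  have hd : r ^ 2 - s ^ 2 ≠ 0 := by
    intro h
    have hsq : r ^ 2 = s ^ 2 := by linear_combination h
    have h2' : r ^ (2 : ℤ) * s ^ (-2 : ℤ) = 1 := by
      rw [zpow_neg]
      rw [show r ^ (2 : ℤ) = r ^ (2 : ℕ) by norm_cast, show s ^ (2 : ℤ) = s ^ (2 : ℕ) by norm_cast]
      rw [hsq]
      exact mul_inv_cancel₀ (pow_ne_zero 2 hs)
    have := hrs 2 (-2) h2'
    omega
  have hd1 : r - s ≠ 0 := by
    intro h
    have hsq : r = s := by linear_combination h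
    have h2' : r ^ (1 : ℤ) * s ^ (-1 : ℤ) = 1 := by
      rw [zpow_neg, zpow_one, zpow_one, hsq]
      exact mul_inv_cancel₀ hs
    have := hrs 1 (-1) h2'
    omega
  -- the representation
  obtain ⟨ρ, hE1, hE2⟩ := rho_spec hr hs hd hd1
  -- spanning
  have hmem := span_eq_top hr hs t
  rw [SpanM] at hmem
  obtain ⟨c, hc⟩ := Finsupp.mem_span_range_iff_exists_finsupp.mp hmem
  -- images of the generators
  have hX1 : ρ (X1 r s) = A1 := hE1
  have hX2 : ρ (X2 r s) = opX2 r s := by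
    rw [X2, opX2, map_sub, map_smul, map_mul, map_mul, hE1, hE2]
  have hX3 : ρ (X3 r s) = opX3 r s := by
    rw [X3, opX3, map_sub, map_smul, map_mul, map_mul, hE2, hX2]
  have hX4 : ρ (X4 r s) = A2 r s := hE2
  have hMonApply : ∀ (m : ℕ × ℕ × ℕ × ℕ) (v : VV), ρ (Mon r s m) v
      = (A1 ^ m.1) ((opX2 r s ^ m.2.1) ((opX3 r s ^ m.2.2.1) ((A2 r s ^ m.2.2.2) v))) := by
    intro m v
    rw [Mon, map_mul, map_mul, map_mul, map_pow, map_pow, map_pow, map_pow, hX1, hX2, hX3, hX4]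
    simp only [Module.End.mul_apply]
  -- evaluation on special vectors
  have hM00 : ∀ m : ℕ × ℕ × ℕ × ℕ,
      ρ (Mon r s m) (bb 0 0 0 0) = bb (m.1 : ℤ) (m.2.1 : ℤ) (m.2.2.1 : ℤ) (m.2.2.2 : ℤ) := by
    rintro ⟨a, b, cc, d⟩
    rw [hMonApply, A2_pow0, opX3_pow hr hs hd hd1]
    simp only [w1_zero, w2_zero, one_mul, mul_one, one_pow, one_smul, zero_add]
    rw [opX2_pow hr hs hd]
    simp only [w2_zero, one_pow, one_smul, zero_add]
    rw [A1_pow]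
    simp only [zero_add]
  have hM01 : ∀ m : ℕ × ℕ × ℕ × ℕ,
      ρ (Mon r s m) (bb 0 0 0 1) = bb (m.1 : ℤ) (m.2.1 : ℤ) (m.2.2.1 : ℤ) ((m.2.2.2 : ℤ) + 1) := by
    rintro ⟨a, b, cc, d⟩
    rw [hMonApply, A2_pow0, opX3_pow hr hs hd hd1]
    simp only [w1_zero, w2_zero, one_mul, mul_one, one_pow, one_smul, zero_add]
    rw [opX2_pow hr hs hd]
    simp only [w2_zero, one_pow, one_smul, zero_add]
    rw [A1_pow]
    simp only [zero_add]
    ring_nf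
  have hM10 : ∀ m : ℕ × ℕ × ℕ × ℕ,
      ρ (Mon r s m) (bb 1 0 0 0)
        = (((r ^ 2)⁻¹) ^ m.2.2.2 * ((r ^ 2)⁻¹ * (s ^ 2)⁻¹) ^ m.2.2.1 * ((s ^ 2)⁻¹) ^ m.2.1)
            • bb ((m.1 : ℤ) + 1) (m.2.1 : ℤ) (m.2.2.1 : ℤ) (m.2.2.2 : ℤ)
          + (alf r s m.2.2.2 * (r⁻¹ * s⁻¹) ^ m.2.2.1)
            • bb (m.1 : ℤ) ((m.2.1 : ℤ) + 1) (m.2.2.1 : ℤ) ((m.2.2.2 : ℤ) - 1)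
          + bet r s m.2.2.2
            • bb (m.1 : ℤ) (m.2.1 : ℤ) ((m.2.2.1 : ℤ) + 1) ((m.2.2.2 : ℤ) - 2) := by
    rintro ⟨a, b, cc, d⟩
    rw [hMonApply, A2_pow1 hr hs hd1]
    simp only [map_add, map_smul, opX3_pow hr hs hd hd1, opX2_pow hr hs hd, A1_pow, smul_smul,
      w1_zero, w2_zero, w2_one hr, w2_one hs, w1_one' hr, w1_one' hs, one_mul, mul_one, one_pow,
      zero_add]
    push_cast
    ring_nf
    try module
  -- ρ t as a sum
  have hρsum : ρ t = c.sum fun m cm => cm • ρ (Mon r s m) := by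
    rw [← hc, map_finsuppSum]
    exact Finsupp.sum_congr fun m _ => map_smul ρ _ _
  have hv : ∀ v : VV, ρ t v = c.sum fun m cm => cm • (ρ (Mon r s m) v) := by
    intro v
    rw [hρsum, Finsupp.sum, Finsupp.sum, LinearMap.sum_apply]
    exact Finset.sum_congr rfl fun m _ => rfl
  -- master equation 2
  have hbb0001 : A2 r s (bb 0 0 0 0) = bb 0 0 0 1 := by
    rw [A2_bb0]; norm_num
  have heq2 : (c.sum fun m cm => cm • bb (m.1 : ℤ) (m.2.1 : ℤ) (m.2.2.1 : ℤ) ((m.2.2.2 : ℤ) + 1))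
      = (c.sum fun m cm =>
          (cm * (-(Pa r s (m.1 : ℤ)))) • bb ((m.1 : ℤ) - 1) ((m.2.1 : ℤ) + 1) (m.2.2.1 : ℤ) (m.2.2.2 : ℤ))
        + (c.sum fun m cm =>
          (cm * (w2 r (m.1 : ℤ) * Qa r s (m.2.1 : ℤ))) • bb (m.1 : ℤ) ((m.2.1 : ℤ) - 1) ((m.2.2.1 : ℤ) + 1) (m.2.2.2 : ℤ))
        + (c.sum fun m cm =>
          (cm * co r s (m.1 : ℤ) (m.2.1 : ℤ) (m.2.2.1 : ℤ)) • bb (m.1 : ℤ) (m.2.1 : ℤ) (m.2.2.1 : ℤ) ((m.2.2.2 : ℤ) + 1)) := by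
    have hkey := congrArg (fun u => ρ u (bb 0 0 0 0)) h2'
    simp only [map_mul, Module.End.mul_apply] at hkey
    rw [hE2, hbb0001, hv, hv] at hkey
    calc (c.sum fun m cm => cm • bb (m.1 : ℤ) (m.2.1 : ℤ) (m.2.2.1 : ℤ) ((m.2.2.2 : ℤ) + 1))
        = c.sum fun m cm => cm • (ρ (Mon r s m) (bb 0 0 0 1)) := by
          exact (Finsupp.sum_congr fun m _ => by rw [hM01]).symm
      _ = A2 r s (c.sum fun m cm => cm • (ρ (Mon r s m) (bb 0 0 0 0))) := by
          rw [← hkey]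
      _ = c.sum fun m cm => cm • phi r s (m.1 : ℤ) (m.2.1 : ℤ) (m.2.2.1 : ℤ) (m.2.2.2 : ℤ) := by
          rw [map_finsuppSum]
          exact Finsupp.sum_congr fun m _ => by rw [map_smul, hM00, A2_bb]
      _ = _ := by
          rw [← Finsupp.sum_add, ← Finsupp.sum_add]
          exact Finsupp.sum_congr fun m _ => by
            rw [phi, smul_add, smul_add, smul_smul, smul_smul, smul_smul]
  -- master equation 1
  have hbb1000 : A1 (bb 0 0 0 0) = bb 1 0 0 0 := by
    rw [A1_bb]; norm_num
  have heq1 : (c.sum fun m cm =>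
        (cm * (((r ^ 2)⁻¹) ^ m.2.2.2 * ((r ^ 2)⁻¹ * (s ^ 2)⁻¹) ^ m.2.2.1 * ((s ^ 2)⁻¹) ^ m.2.1))
          • bb ((m.1 : ℤ) + 1) (m.2.1 : ℤ) (m.2.2.1 : ℤ) (m.2.2.2 : ℤ))
      + (c.sum fun m cm =>
        (cm * (alf r s m.2.2.2 * (r⁻¹ * s⁻¹) ^ m.2.2.1)) • bb (m.1 : ℤ) ((m.2.1 : ℤ) + 1) (m.2.2.1 : ℤ) ((m.2.2.2 : ℤ) - 1))
      + (c.sum fun m cm =>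
        (cm * bet r s m.2.2.2) • bb (m.1 : ℤ) (m.2.1 : ℤ) ((m.2.2.1 : ℤ) + 1) ((m.2.2.2 : ℤ) - 2))
      = c.sum fun m cm => cm • bb ((m.1 : ℤ) + 1) (m.2.1 : ℤ) (m.2.2.1 : ℤ) (m.2.2.2 : ℤ) := by
    have hkey := congrArg (fun u => ρ u (bb 0 0 0 0)) h1'
    simp only [map_mul, Module.End.mul_apply] at hkey
    rw [hE1, hbb1000, hv, hv] at hkey
    calc _ = c.sum fun m cm => cm • (ρ (Mon r s m) (bb 1 0 0 0)) := by
          rw [← Finsupp.sum_add, ← Finsupp.sum_add]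
          exact Finsupp.sum_congr fun m _ => by
            rw [hM10, smul_add, smul_add, smul_smul, smul_smul, smul_smul]
      _ = A1 (c.sum fun m cm => cm • (ρ (Mon r s m) (bb 0 0 0 0))) := by
          rw [← hkey]
      _ = _ := by
          rw [map_finsuppSum]
          exact Finsupp.sum_congr fun m _ => by
            rw [map_smul, hM00, A1_bb]
  -- coefficients vanish away from the origin
  have habc := claim_abc hr hs hrs c heq2
  have hdd := claim_d hr hs hrs c _ _ heq1
  have hzero : ∀ m : ℕ × ℕ × ℕ × ℕ, m ≠ (0, 0, 0, 0) → c m = 0 := by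
    rintro ⟨a, b, cc, d⟩ hm
    by_cases hcase : a = 0 ∧ b = 0 ∧ cc = 0
    · obtain ⟨rfl, rfl, rfl⟩ := hcase
      have hdne : d ≠ 0 := by
        intro hd0
        exact hm (by rw [hd0])
      exact hdd d hdne
    · exact habc a b cc d hcase
  -- conclude
  have hcsingle : c = Finsupp.single (0, 0, 0, 0) (c (0, 0, 0, 0)) := by
    ext m
    rcases eq_or_ne m (0, 0, 0, 0) with rfl | hm
    · simp
    · rw [hzero m hm, Finsupp.single_apply, if_neg (Ne.symm hm)]
  rw [hcsingle] at hc
  rw [Finsupp.sum_single_index (by rw [zero_smul])] at hc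
  refine ⟨c (0, 0, 0, 0), ?_⟩
  rw [Algebra.algebraMap_eq_smul_one]
  rw [← hc]
  congr 1
  simp [Mon]

theorem stmt7 (r s : ℂ) (hr : r ≠ 0) (hs : s ≠ 0)
    (hrs : ∀ m n : ℤ, r ^ m * s ^ n = 1 → m = 0 ∧ n = 0)
    (t : U r s) (μ1 μ2 : ℂ)
    (h1 : t * E1 r s - E1 r s * t + μ1 • E1 r s = 0)
    (h2 : t * E2 r s - E2 r s * t + μ2 • E2 r s = 0) :
    μ1 = 0 ∧ μ2 = 0 ∧ ∃ c : ℂ, t = algebraMap ℂ (U r s) c :=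
  stmt7' r s hr hs hrs t μ1 μ2 h1 h2

end TwoParamB2
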